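/- Let (X,G) be a Polish structure and H a countable group. Then for all finite subsets A, B, C of H(X) (regarded as finite tuples via fixed enumerations): A is nm-independent from B over C in the Polish structure (H(X),G) if and only if Ã is nm-independent from B̃ over C̃ in (X,G). -/

import Mathlib

open Function

variable (X H : Type*)

/-- `H(X)`: the direct sum of copies of `H` indexed by `X`, realized as the subgroup of
the product group `X → H` consisting of finitely supported functions. -/
def FinSupp [Group H] : Subgroup (X → H) where
  carrier := {f | (Function.mulSupport f).Finite}
  one_mem' := by simp [Function.mulSupport_one]
  mul_mem' {f g} hf hg := (hf.union hg).subset (Function.mulSupport_mul f g)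
  inv_mem' {f} hf := by simpa [Function.mulSupport_inv] using hf

variable (G : Type*) [Group G] [Group H] [MulAction G X]

/-- The action of `G` on `H(X)` given by `(g • y) x = y (g⁻¹ • x)`. -/
instance : MulAction G ↥(FinSupp X H) where
  smul g y := ⟨fun x => (y : X → H) (g⁻¹ • x), by
    show (Function.mulSupport ((y : X → H) ∘ (fun x => g⁻¹ • x))).Finite
    rw [Function.mulSupport_comp_eq_preimage]
    exact y.2.preimage ((MulAction.injective (g⁻¹ : G)).injOn)⟩
  one_smul y := Subtype.ext <| funext fun x => by
    show (y : X → H) ((1 : G)⁻¹ • x) = (y : X → H) x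
    rw [inv_one, one_smul]
  mul_smul g₁ g₂ y := Subtype.ext <| funext fun x => by
    show (y : X → H) ((g₁ * g₂)⁻¹ • x) = (y : X → H) (g₂⁻¹ • g₁⁻¹ • x)
    rw [mul_inv_rev, mul_smul]

lemma smul_finSupp_apply (g : G) (y : ↥(FinSupp X H)) (x : X) :
    ((g • y : ↥(FinSupp X H)) : X → H) x = (y : X → H) (g⁻¹ • x) := rfl

/-- The pointwise stabilizer of a set `A ⊆ X` in `G`. -/
def fixPt (G : Type*) [Group G] (X : Type*) [MulAction G X] (A : Set X) : Subgroup G where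
  carrier := {g | ∀ x ∈ A, g • x = x}
  one_mem' := fun x _ => one_smul G x
  mul_mem' {a b} ha hb := fun x hx => by rw [mul_smul, hb x hx, ha x hx]
  inv_mem' {a} ha := fun x hx => by
    conv_lhs => rw [← ha x hx]
    rw [inv_smul_smul]

/-- The orbit `o(a/A)` of a finite tuple `a` over a set `A`: the orbit of `a` under the
pointwise stabilizer `G_A`, acting diagonally. -/
def orbitOver (G : Type*) [Group G] (X : Type*) [MulAction G X] {n : ℕ}
    (A : Set X) (a : Fin n → X) : Set (Fin n → X) :=
  {b | ∃ g ∈ fixPt G X A, (fun i => g • a i) = b}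

/-- `a` is nm-independent from `B` over `A` (written `a ⫝_A B`): the set of those `g` in the
pointwise stabilizer `G_A` with `g • a ∈ o(a/A ∪ B)` is non-meager in `G_A` (carrying the
subspace topology from `G`). -/
def NMIndep (G : Type*) [Group G] [TopologicalSpace G] (X : Type*) [MulAction G X]
    {n : ℕ} (a : Fin n → X) (A B : Set X) : Prop :=
  ¬ IsMeagre {g : ↥(fixPt G X A) | (fun i => (g : G) • a i) ∈ orbitOver G X (A ∪ B) a}

/-- `a ⫝_A B` for a single element `a`. -/
def NMIndep1 (G : Type*) [Group G] [TopologicalSpace G] (X : Type*) [MulAction G X]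
    (a : X) (A B : Set X) : Prop :=
  NMIndep G X (fun _ : Fin 1 => a) A B

/-- `Ã ⊆ X` for a set `A ⊆ H(X)`: the union of the supports of the members of `A`. -/
def tildeSet (A : Set ↥(FinSupp X H)) : Set X :=
  ⋃ y ∈ A, Function.mulSupport (y : X → H)


/-! ### Auxiliary lemmas -/

open Pointwise Topology

section TopAux

variable {α β : Type*} [TopologicalSpace α] [TopologicalSpace β]

lemma aux_nwd_image {f : α → β} (hf : IsOpenEmbedding f) {t : Set α}
    (ht : IsNowhereDense t) : IsNowhereDense (f '' t) := by
  rw [IsNowhereDense, Set.eq_empty_iff_forall_notMem]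
  intro x hx
  have hVo : IsOpen (interior (closure (f '' t))) := isOpen_interior
  have hVcl : interior (closure (f '' t)) ⊆ closure (Set.range f) :=
    interior_subset.trans (closure_mono (Set.image_subset_range f t))
  obtain ⟨y, hyV, z, rfl⟩ :
      ∃ y ∈ interior (closure (f '' t)), ∃ z, f z = y := by
    rcases mem_closure_iff.1 (hVcl hx) _ hVo hx with ⟨y, hy1, hy2⟩
    exact ⟨y, hy1, hy2⟩
  have hsub : f ⁻¹' (interior (closure (f '' t))) ⊆ closure t := by
    rw [hf.isEmbedding.closure_eq_preimage_closure_image t]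
    exact Set.preimage_mono interior_subset
  have : z ∈ interior (closure t) :=
    interior_maximal hsub (hVo.preimage hf.continuous) hyV
  rw [ht] at this
  exact this

lemma aux_meagre_image {f : α → β} (hf : IsOpenEmbedding f) {s : Set α}
    (hs : IsMeagre s) : IsMeagre (f '' s) := by
  rw [isMeagre_iff_countable_union_isNowhereDense] at hs ⊢
  obtain ⟨S, hnwd, hcnt, hsub⟩ := hs
  refine ⟨(f '' ·) '' S, ?_, hcnt.image _, ?_⟩
  · rintro _ ⟨t, htS, rfl⟩; exact aux_nwd_image hf (hnwd t htS)
  · rintro _ ⟨x, hxs, rfl⟩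
    obtain ⟨t, htS, hxt⟩ := hsub hxs
    exact ⟨f '' t, ⟨t, htS, rfl⟩, ⟨x, hxt, rfl⟩⟩

lemma aux_meagre_transfer {f : α → β} (hf : IsOpenEmbedding f) {s : Set β}
    (hsub : s ⊆ Set.range f) : IsMeagre (f ⁻¹' s) ↔ IsMeagre s := by
  constructor
  · intro h
    have := aux_meagre_image hf h
    rwa [Set.image_preimage_eq_of_subset hsub] at this
  · exact fun h => h.preimage_of_isOpenMap hf.continuous hf.isOpenMap

lemma aux_meagre_homeo (e : α ≃ₜ β) {s : Set β} : IsMeagre (e ⁻¹' s) ↔ IsMeagre s :=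
  aux_meagre_transfer e.isOpenEmbedding (by simp [e.surjective.range_eq])

lemma aux_not_meagre_nonempty {s : Set α} (h : ¬ IsMeagre s) : s.Nonempty := by
  rcases s.eq_empty_or_nonempty with rfl | h2
  · exact absurd IsMeagre.empty h
  · exact h2

lemma aux_meagre_biUnion {ι : Type*} (s : Finset ι) (f : ι → Set α)
    (h : ∀ i ∈ s, IsMeagre (f i)) : IsMeagre (⋃ i ∈ s, f i) := by
  rw [IsMeagre, Set.compl_iUnion₂]
  exact (Filter.biInter_finset_mem s).2 h

lemma aux_exists_nonMeagre_piece {ι : Type*} (s : Finset ι) (f : ι → Set α)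
    {W : Set α} (hW : ¬ IsMeagre W) (hcov : W ⊆ ⋃ i ∈ s, f i) :
    ∃ i ∈ s, ¬ IsMeagre (W ∩ f i) := by
  by_contra h
  push_neg at h
  apply hW
  refine (aux_meagre_biUnion s (fun i => W ∩ f i) h).mono fun x hx => ?_
  obtain ⟨i, hi, hfi⟩ := Set.mem_iUnion₂.1 (hcov hx)
  exact Set.mem_iUnion₂.2 ⟨i, hi, hx, hfi⟩

end TopAux

section GroupAux

lemma mem_fixPt_iff {A : Set X} {g : G} : g ∈ fixPt G X A ↔ ∀ x ∈ A, g • x = x := Iff.rfl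

lemma fixPt_mono {Z : Type*} [MulAction G Z] {A B : Set Z} (h : A ⊆ B) :
    fixPt G Z B ≤ fixPt G Z A :=
  fun g hg x hx => hg x (h hx)

lemma isClosed_fixPt [TopologicalSpace G] (hstab : ∀ x : X, IsClosed {g : G | g • x = x})
    (A : Set X) : IsClosed ((fixPt G X A : Set G)) := by
  have : (fixPt G X A : Set G) = ⋂ x ∈ A, {g : G | g • x = x} := by
    ext g
    rw [Set.mem_iInter₂]
    exact Iff.rfl
  rw [this]
  exact isClosed_biInter fun x _ => hstab x

/-- If `g` fixes `S̃` pointwise, then `g` fixes every element of `S ⊆ H(X)`. -/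
lemma fixPt_tilde_le (S : Set ↥(FinSupp X H)) :
    fixPt G X (tildeSet X H S) ≤ fixPt G ↥(FinSupp X H) S := by
  intro g hg y hy
  apply Subtype.ext; funext x
  rw [smul_finSupp_apply]
  by_cases h1 : x ∈ Function.mulSupport (y : X → H)
  · have hx : g • x = x := hg x (Set.mem_biUnion hy h1)
    have hx' : g⁻¹ • x = x := by conv_lhs => rw [← hx, inv_smul_smul]
    rw [hx']
  · by_cases h2 : (y : X → H) (g⁻¹ • x) = 1
    · rw [h2, Function.notMem_mulSupport.mp h1]
    · exfalso
      have hmem : g⁻¹ • x ∈ tildeSet X H S := Set.mem_biUnion hy h2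
      have := hg _ hmem
      rw [smul_inv_smul] at this
      exact h1 (by rw [Function.mem_mulSupport, this]; exact h2)

/-- Elements of the pointwise stabilizer of `S ⊆ H(X)` map `S̃` into itself. -/
lemma smul_mem_tildeSet {S : Set ↥(FinSupp X H)} {g : G}
    (hg : g ∈ fixPt G ↥(FinSupp X H) S) {x : X} (hx : x ∈ tildeSet X H S) :
    g • x ∈ tildeSet X H S := by
  obtain ⟨y, hy, hxy⟩ : ∃ y ∈ S, x ∈ Function.mulSupport (y : X → H) := by
    simpa [tildeSet] using hx
  refine Set.mem_biUnion hy ?_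
  have hgy : g • y = y := hg y hy
  have h2 : ((g • y : ↥(FinSupp X H)) : X → H) (g • x) = (y : X → H) x := by
    rw [smul_finSupp_apply, inv_smul_smul]
  rw [hgy] at h2
  rw [Function.mem_mulSupport, h2]
  exact hxy

lemma tildeSet_union (S T : Set ↥(FinSupp X H)) :
    tildeSet X H (S ∪ T) = tildeSet X H S ∪ tildeSet X H T :=
  Set.biUnion_union S T _

/-- Characterization of nm-independence via a product set of stabilizers. -/
lemma nmIndep_iff {Z : Type*} [MulAction G Z] [TopologicalSpace G] {n : ℕ}
    (a : Fin n → Z) (A B : Set Z) :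
    NMIndep G Z a A B ↔
      ¬ IsMeagre {g : ↥(fixPt G Z A) |
        (g : G) ∈ (fixPt G Z (A ∪ B) : Set G) * (fixPt G Z (Set.range a) : Set G)} := by
  unfold NMIndep
  apply not_congr
  apply iff_of_eq
  congr 1
  ext g
  simp only [Set.mem_setOf_eq, orbitOver, Set.mem_mul, SetLike.mem_coe]
  constructor
  · rintro ⟨h, hh, heq⟩
    refine ⟨h, hh, h⁻¹ * (g : G), ?_, by group⟩
    rintro _ ⟨i, rfl⟩
    have hi := congrFun heq i
    rw [mul_smul, ← hi, inv_smul_smul]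
  · rintro ⟨h, hh, r, hr, hhr⟩
    refine ⟨h, hh, funext fun i => ?_⟩
    have : (g : G) • a i = (h * r) • a i := by rw [hhr]
    rw [this, mul_smul, hr (a i) ⟨i, rfl⟩]

/-- Finitely many coset representatives for the pointwise stabilizer of a finite invariant
set inside a larger subgroup. -/
lemma cover_lemma {T : Set X} (hT : T.Finite) (V : Subgroup G)
    (hmap : ∀ v ∈ V, ∀ x ∈ T, v • x ∈ T) :
    ∃ s : Finset G, (∀ g ∈ s, g ∈ V) ∧ ∀ v ∈ V, ∃ g ∈ s, g⁻¹ * v ∈ fixPt G X T := by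
  classical
  haveI : Finite ↥T := hT.to_subtype
  set Φ : ↥V → (↥T → ↥T) := fun v x => ⟨(v : G) • (x : X), hmap v v.2 x x.2⟩ with hΦ
  have hfin : (Set.range Φ).Finite := Set.toFinite _
  set pick : (↥T → ↥T) → G :=
    fun u => if h : ∃ v : ↥V, Φ v = u then ((Classical.choose h : ↥V) : G) else 1 with hpick
  refine ⟨hfin.toFinset.image pick, ?_, ?_⟩
  · intro g hg
    simp only [Finset.mem_image, Set.Finite.mem_toFinset] at hg
    obtain ⟨u, _, rfl⟩ := hg
    by_cases h : ∃ v : ↥V, Φ v = u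
    · simp only [hpick, dif_pos h]; exact (Classical.choose h).2
    · simp only [hpick, dif_neg h]; exact V.one_mem
  · intro v hv
    have h : ∃ w : ↥V, Φ w = Φ ⟨v, hv⟩ := ⟨⟨v, hv⟩, rfl⟩
    refine ⟨pick (Φ ⟨v, hv⟩),
      Finset.mem_image_of_mem _ (hfin.mem_toFinset.2 ⟨⟨v, hv⟩, rfl⟩), ?_⟩
    simp only [hpick, dif_pos h]
    intro x hx
    have hspec := congrFun (Classical.choose_spec h) ⟨x, hx⟩
    have hxx : ((Classical.choose h : ↥V) : G) • x = v • x := congrArg Subtype.val hspec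
    rw [mul_smul, ← hxx, inv_smul_smul]

end GroupAux

/-- Let `(X,G)` be a Polish structure and `H` a countable group. For all
finite subsets `A`, `B`, `C` of `H(X)`, with `A` and `Ã` regarded as finite tuples via fixed
enumerations: `A ⫝_C B` holds in `(H(X),G)` if and only if `Ã ⫝_C̃ B̃` holds in `(X,G)`. -/
theorem statement3 [TopologicalSpace G] [IsTopologicalGroup G] [PolishSpace G]
    [FaithfulSMul G X] (hstab : ∀ x : X, IsClosed {g : G | g • x = x})
    [Countable H]
    (A B C : Finset ↥(FinSupp X H)) {n m : ℕ}
    (a : Fin n → ↥(FinSupp X H)) (ha : Set.range a = (A : Set ↥(FinSupp X H)))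
    (ta : Fin m → X) (hta : Set.range ta = tildeSet X H (A : Set ↥(FinSupp X H))) :
    NMIndep G ↥(FinSupp X H) a (C : Set ↥(FinSupp X H)) (B : Set ↥(FinSupp X H)) ↔
      NMIndep G X ta (tildeSet X H (C : Set ↥(FinSupp X H)))
        (tildeSet X H (B : Set ↥(FinSupp X H))) := by
  classical
  rw [nmIndep_iff, nmIndep_iff, ha, hta]
  set Ct := tildeSet X H (C : Set ↥(FinSupp X H)) with hCt
  set Bt := tildeSet X H (B : Set ↥(FinSupp X H)) with hBt
  set At := tildeSet X H (A : Set ↥(FinSupp X H)) with hAt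
  set L := fixPt G ↥(FinSupp X H) (C : Set ↥(FinSupp X H)) with hLdef
  set Q := fixPt G ↥(FinSupp X H) ((C : Set ↥(FinSupp X H)) ∪ (B : Set ↥(FinSupp X H))) with hQdef
  set SA := fixPt G ↥(FinSupp X H) (A : Set ↥(FinSupp X H)) with hSAdef
  set K := fixPt G X Ct with hKdef
  set P := fixPt G X (Ct ∪ Bt) with hPdef
  set R := fixPt G X At with hRdef
  -- basic inclusions
  have hKL : K ≤ L := by rw [hKdef, hLdef, hCt]; exact fixPt_tilde_le X H G _
  have hPQ : P ≤ Q := by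
    rw [hPdef, hQdef, hCt, hBt, ← tildeSet_union]
    exact fixPt_tilde_le X H G _
  have hRSA : R ≤ SA := by rw [hRdef, hSAdef, hAt]; exact fixPt_tilde_le X H G _
  have hQL : Q ≤ L := by rw [hQdef, hLdef]; exact fixPt_mono G Set.subset_union_left
  have hPK : P ≤ K := by rw [hPdef, hKdef]; exact fixPt_mono G Set.subset_union_left
  have hmapsL : ∀ v ∈ L, ∀ x ∈ Ct, v • x ∈ Ct := by
    rw [hLdef, hCt]; exact fun v hv x hx => smul_mem_tildeSet X H G hv hx
  have hmapsQ : ∀ v ∈ Q, ∀ x ∈ Ct ∪ Bt, v • x ∈ Ct ∪ Bt := by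
    rw [hQdef, hCt, hBt, ← tildeSet_union]
    exact fun v hv x hx => smul_mem_tildeSet X H G hv hx
  have hmapsSA : ∀ v ∈ SA, ∀ x ∈ At, v • x ∈ At := by
    rw [hSAdef, hAt]; exact fun v hv x hx => smul_mem_tildeSet X H G hv hx
  have hnorm : ∀ l ∈ L, ∀ k ∈ K, l * k * l⁻¹ ∈ K := by
    intro l hl k hk x hx
    have h1 : l⁻¹ • x ∈ Ct := hmapsL l⁻¹ (L.inv_mem hl) x hx
    have h2 : k • (l⁻¹ • x) = l⁻¹ • x := hk _ h1
    show (l * k * l⁻¹) • x = x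
    rw [mul_smul, mul_smul, h2, smul_inv_smul]
  -- finiteness of the tilde sets
  have hCtfin : Ct.Finite := by
    rw [hCt]; exact Set.Finite.biUnion C.finite_toSet fun y _ => y.2
  have hBtfin : Bt.Finite := by
    rw [hBt]; exact Set.Finite.biUnion B.finite_toSet fun y _ => y.2
  have hAtfin : At.Finite := by rw [← hta]; exact Set.finite_range ta
  -- coset representatives
  obtain ⟨sL, hsL1, hsL2⟩ := cover_lemma X G hCtfin L hmapsL
  obtain ⟨sQ, hsQ1, hsQ2⟩ := cover_lemma X G (hCtfin.union hBtfin) Q hmapsQ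
  obtain ⟨sS, hsS1, hsS2⟩ := cover_lemma X G hAtfin SA hmapsSA
  rw [← hKdef] at hsL2
  rw [← hPdef] at hsQ2
  rw [← hRdef] at hsS2
  -- K is closed in G
  have hKclosed : IsClosed (K : Set G) := by
    rw [hKdef]; exact isClosed_fixPt X G hstab _
  -- K is relatively open in L
  have hopen : IsOpen {l : ↥L | (l : G) ∈ K} := by
    rw [← isClosed_compl_iff]
    have hset : {l : ↥L | (l : G) ∈ K}ᶜ =
        (Subtype.val) ⁻¹' (⋃ g ∈ sL.filter (fun g => g ∉ K), (fun x => g * x) '' (K : Set G)) := by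
      ext l
      simp only [Set.mem_compl_iff, Set.mem_setOf_eq, Set.mem_preimage, Set.mem_iUnion,
        Finset.mem_filter, Set.mem_image, SetLike.mem_coe]
      constructor
      · intro hl
        obtain ⟨g, hg, hginv⟩ := hsL2 (l : G) l.2
        refine ⟨g, ⟨hg, fun hgK => hl ?_⟩, g⁻¹ * (l : G), hginv, by group⟩
        have := K.mul_mem hgK hginv
        rwa [mul_inv_cancel_left] at this
      · rintro ⟨g, ⟨_, hgK⟩, k, hk, hEq⟩ hl
        apply hgK
        have hEq' : g * k = (l : G) := hEq
        have hgeq : g = (l : G) * k⁻¹ := by rw [← hEq']; group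
        rw [hgeq]
        exact K.mul_mem hl (K.inv_mem hk)
    rw [hset]
    apply IsClosed.preimage continuous_subtype_val
    exact (sL.filter (fun g => g ∉ K)).finite_toSet.isClosed_biUnion
      fun g _ => (Homeomorph.mulLeft g).isClosedMap _ hKclosed
  -- the inclusion map from K to L is an open embedding
  set f : ↥K → ↥L := fun k => ⟨(k : G), hKL k.2⟩ with hfdef
  have hfcont : Continuous f := Continuous.subtype_mk continuous_subtype_val _
  have hrange : Set.range f = {l : ↥L | (l : G) ∈ K} := by
    ext l
    constructor
    · rintro ⟨k, rfl⟩; exact k.2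
    · intro hl; exact ⟨⟨(l : G), hl⟩, Subtype.ext rfl⟩
  have hfemb : IsOpenEmbedding f := by
    refine ⟨⟨IsInducing.of_comp hfcont continuous_subtype_val ?_, ?_⟩, ?_⟩
    · exact IsInducing.subtypeVal
    · intro k k' h
      have h2 : ((f k : ↥L) : G) = ((f k' : ↥L) : G) := congrArg Subtype.val h
      exact Subtype.ext h2
    · rw [hrange]; exact hopen
  constructor
  · -- forward direction
    intro hA hSK
    apply hA
    by_contra hSL
    -- some coset piece of L is non-meagre
    have hcov1 : {g : ↥L | (g : G) ∈ (Q : Set G) * (SA : Set G)} ⊆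
        ⋃ t ∈ sL, {g : ↥L | t⁻¹ * (g : G) ∈ K} := by
      intro g _
      obtain ⟨tt, htt, htk⟩ := hsL2 (g : G) g.2
      exact Set.mem_iUnion₂.2 ⟨tt, htt, htk⟩
    obtain ⟨t, hts, hW1⟩ := aux_exists_nonMeagre_piece sL _ hSL hcov1
    have htL : t ∈ L := hsL1 t hts
    set τ : ↥L := ⟨t, htL⟩ with hτdef
    set e := Homeomorph.mulLeft τ with hedef
    set W₁ := {g : ↥L | (g : G) ∈ (Q : Set G) * (SA : Set G)} ∩ {g : ↥L | t⁻¹ * (g : G) ∈ K}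
      with hW₁def
    have hW2 : ¬ IsMeagre (e ⁻¹' W₁) := fun hm => hW1 ((aux_meagre_homeo e).1 hm)
    have hmem2 : ∀ l : ↥L, l ∈ e ⁻¹' W₁ ↔
        (t * (l : G) ∈ (Q : Set G) * (SA : Set G) ∧ (l : G) ∈ K) := by
      intro l
      simp only [hedef, hW₁def, Set.mem_preimage, Homeomorph.coe_mulLeft, Set.mem_inter_iff,
        Set.mem_setOf_eq, Subgroup.coe_mul, hτdef]
      constructor
      · rintro ⟨h1, h2⟩
        rw [inv_mul_cancel_left] at h2
        exact ⟨h1, h2⟩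
      · rintro ⟨h1, h2⟩
        refine ⟨h1, ?_⟩
        rwa [inv_mul_cancel_left]
    have hsubrange : e ⁻¹' W₁ ⊆ Set.range f := by
      intro l hl
      rw [hrange]
      exact ((hmem2 l).1 hl).2
    have hW3 : ¬ IsMeagre (f ⁻¹' (e ⁻¹' W₁)) :=
      fun hm => hW2 ((aux_meagre_transfer hfemb hsubrange).1 hm)
    -- decompose into double coset pieces over K
    have hcov2 : f ⁻¹' (e ⁻¹' W₁) ⊆ ⋃ p ∈ sQ ×ˢ sS,
        {k : ↥K | p.1⁻¹ * (t * (k : G)) * p.2 ∈ (P : Set G) * (R : Set G)} := by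
      intro k hk
      have h1 : t * (k : G) ∈ (Q : Set G) * (SA : Set G) := ((hmem2 (f k)).1 hk).1
      obtain ⟨q, hq, s', hs', hqs⟩ := Set.mem_mul.1 h1
      obtain ⟨i, hi, hip⟩ := hsQ2 q hq
      obtain ⟨j, hj, hjr⟩ := hsS2 s'⁻¹ (SA.inv_mem hs')
      refine Set.mem_iUnion₂.2 ⟨(i, j), Finset.mem_product.2 ⟨hi, hj⟩, ?_⟩
      have hsj : s' * j ∈ R := by
        have := R.inv_mem hjr
        rwa [mul_inv_rev, inv_inv, inv_inv] at this
      refine Set.mem_mul.2 ⟨i⁻¹ * q, hip, s' * j, hsj, ?_⟩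
      rw [← hqs]; group
    obtain ⟨⟨i, j⟩, hij, hZ0⟩ := aux_exists_nonMeagre_piece (sQ ×ˢ sS) _ hW3 hcov2
    have hZ : ¬ IsMeagre {k : ↥K | i⁻¹ * (t * (k : G)) * j ∈ (P : Set G) * (R : Set G)} :=
      fun h => hZ0 (h.mono Set.inter_subset_right)
    have hiQ : i ∈ Q := hsQ1 i (Finset.mem_product.1 hij).1
    have hjSA : j ∈ SA := hsS1 j (Finset.mem_product.1 hij).2
    -- pick a point of the non-meagre piece
    obtain ⟨k₀, hk₀⟩ := aux_not_meagre_nonempty hZ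
    obtain ⟨p₀, hp₀, r₀, hr₀, hpr₀⟩ := Set.mem_mul.1 hk₀
    set α : G := t⁻¹ * i * p₀ with hαdef
    set β : G := r₀ * j⁻¹ with hβdef
    have hαβ : α * β = (k₀ : G) := by
      have h5 : α * β = t⁻¹ * i * (p₀ * r₀) * j⁻¹ := by rw [hαdef, hβdef]; group
      rw [h5, hpr₀]; group
    have hβeq : β = α⁻¹ * (k₀ : G) := by rw [← hαβ]; group
    have hαL : α ∈ L := by
      rw [hαdef]
      exact L.mul_mem (L.mul_mem (L.inv_mem htL) (hQL hiQ)) (hKL (hPK hp₀))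
    have hψK : ∀ k : ↥K, α⁻¹ * (k : G) * β⁻¹ ∈ K := by
      intro k
      have heq : α⁻¹ * (k : G) * β⁻¹ = α⁻¹ * ((k : G) * (k₀ : G)⁻¹) * (α⁻¹)⁻¹ := by
        rw [hβeq]; group
      rw [heq]
      exact hnorm α⁻¹ (L.inv_mem hαL) _ (K.mul_mem k.2 (K.inv_mem k₀.2))
    have hψK' : ∀ k : ↥K, α * (k : G) * β ∈ K := by
      intro k
      have heq : α * (k : G) * β = (α * (k : G) * α⁻¹) * (k₀ : G) := by
        rw [hβeq]; group
      rw [heq]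
      exact K.mul_mem (hnorm α hαL _ k.2) k₀.2
    set ψ : ↥K ≃ₜ ↥K :=
      { toFun := fun k => ⟨α⁻¹ * (k : G) * β⁻¹, hψK k⟩
        invFun := fun k => ⟨α * (k : G) * β, hψK' k⟩
        left_inv := fun k => Subtype.ext (by
          show α * (α⁻¹ * (k : G) * β⁻¹) * β = (k : G)
          group)
        right_inv := fun k => Subtype.ext (by
          show α⁻¹ * (α * (k : G) * β) * β⁻¹ = (k : G)
          group)
        continuous_toFun := Continuous.subtype_mk
          ((continuous_const.mul continuous_subtype_val).mul continuous_const) _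
        continuous_invFun := Continuous.subtype_mk
          ((continuous_const.mul continuous_subtype_val).mul continuous_const) _ } with hψdef
    -- the piece maps into S_K under ψ
    have hZsub : {k : ↥K | i⁻¹ * (t * (k : G)) * j ∈ (P : Set G) * (R : Set G)} ⊆
        ψ ⁻¹' {g : ↥K | (g : G) ∈ (P : Set G) * (R : Set G)} := by
      intro k hkZ
      obtain ⟨p, hp, r, hr, hpr⟩ := Set.mem_mul.1 hkZ
      show ((ψ k : ↥K) : G) ∈ (P : Set G) * (R : Set G)
      have hcoe : ((ψ k : ↥K) : G) = α⁻¹ * (k : G) * β⁻¹ := rfl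
      have h9 : α⁻¹ * (k : G) * β⁻¹ = p₀⁻¹ * (i⁻¹ * (t * (k : G)) * j) * r₀⁻¹ := by
        rw [hαdef, hβdef]; group
      rw [← hpr] at h9
      refine Set.mem_mul.2
        ⟨p₀⁻¹ * p, P.mul_mem (P.inv_mem hp₀) hp, r * r₀⁻¹, R.mul_mem hr (R.inv_mem hr₀), ?_⟩
      rw [hcoe, h9]; group
    apply hZ
    exact (hSK.preimage_of_isOpenMap ψ.continuous ψ.isOpenMap).mono hZsub
  · -- backward direction
    intro hSK hMSL
    apply hSK
    have hW0 : IsMeagre {l : ↥L | (l : G) ∈ (P : Set G) * (R : Set G) ∧ (l : G) ∈ K} := by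
      refine hMSL.mono fun l hl => ?_
      exact Set.mul_subset_mul (fun x hx => hPQ hx) (fun x hx => hRSA hx) hl.1
    have hpre := hW0.preimage_of_isOpenMap hfemb.continuous hfemb.isOpenMap
    exact hpre.mono fun k hk => And.intro hk k.2
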